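/- Let S_g ∈ ℝ^{N_g×N_g}, w_0 ∈ ℝ^{N_g} with (S_g, w_0) controllable, and A ∈ ℝ^{n×n}, x̄_0 ∈ ℝ^n, with σ(S_g) ∩ σ(A) = ∅. Then the left kernel of the (N_g+n)-step controllability matrix of the block pair (diag(S_g, A), (w_0, x̄_0)) equals {(0, v) : v ∈ ℝ^n, vᵀ [x̄_0, A x̄_0, ..., A^{n-1} x̄_0] = 0}. -/

import Mathlib

open Matrix

open Polynomial
namespace Stmt13Aux

variable {m : Type*} [Fintype m] [DecidableEq m]

noncomputable def dotL (v x : m → ℝ) : Matrix m m ℝ →ₗ[ℝ] ℝ where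
  toFun N := v ⬝ᵥ (N *ᵥ x)
  map_add' N₁ N₂ := by simp [Matrix.add_mulVec]
  map_smul' c N := by simp [Matrix.smul_mulVec]

lemma dot_aeval (v x : m → ℝ) (M : Matrix m m ℝ) (p : ℝ[X]) :
    v ⬝ᵥ ((aeval M p) *ᵥ x) =
      ∑ k ∈ Finset.range (p.natDegree + 1), p.coeff k * (v ⬝ᵥ ((M ^ k) *ᵥ x)) := by
  have h : v ⬝ᵥ ((aeval M p) *ᵥ x) = dotL v x (aeval M p) := rfl
  rw [h, Polynomial.aeval_eq_sum_range, map_sum]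
  simp [dotL, Matrix.smul_mulVec]

lemma isUnit_of_rank_eq {N : ℕ} (C : Matrix (Fin N) (Fin N) ℝ) (h : C.rank = N) :
    IsUnit C := by
  rw [← Matrix.mulVec_surjective_iff_isUnit]
  have : LinearMap.range C.mulVecLin = ⊤ := by
    apply Submodule.eq_top_of_finrank_eq
    rw [← Matrix.rank, h, Module.finrank_fintype_fun_eq_card, Fintype.card_fin]
  intro y
  obtain ⟨w, hw⟩ := LinearMap.range_eq_top.mp this y
  exact ⟨w, hw⟩

lemma eval_charpoly (M : Matrix m m ℂ) (μ : ℂ) :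
    M.charpoly.eval μ = (Matrix.scalar m μ - M).det := by
  rw [Matrix.charpoly, _root_.eval_det, Matrix.matPolyEquiv_charmatrix]
  simp

lemma mem_spectrum_of_root (M : Matrix m m ℂ) (μ : ℂ) (h : M.charpoly.eval μ = 0) :
    μ ∈ spectrum ℂ M := by
  rw [spectrum.mem_iff, Matrix.isUnit_iff_isUnit_det, isUnit_iff_ne_zero, not_not]
  rw [eval_charpoly] at h
  convert h using 2
  simp [Matrix.algebraMap_eq_diagonal, Matrix.scalar_apply]


lemma isUnit_aeval_charpoly (n Ng : ℕ)
    (Sg : Matrix (Fin Ng) (Fin Ng) ℝ) (A : Matrix (Fin n) (Fin n) ℝ)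
    (hspec : Disjoint (spectrum ℂ (Sg.map (fun a => (a : ℂ))))
      (spectrum ℂ (A.map (fun a => (a : ℂ))))) :
    IsUnit (aeval Sg A.charpoly) := by
  set q := A.charpoly with hq
  set f : ℝ →ₐ[ℝ] ℂ := Algebra.ofId ℝ ℂ with hf
  rw [Matrix.isUnit_iff_isUnit_det, isUnit_iff_ne_zero]
  intro h0
  have hmap : (aeval Sg q).map (algebraMap ℝ ℂ) = aeval (Sg.map (algebraMap ℝ ℂ)) q := by
    have := Polynomial.aeval_algHom_apply (AlgHom.mapMatrix (m := Fin Ng) f) Sg q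
    exact this.symm
  have hdet : (aeval (Sg.map (algebraMap ℝ ℂ)) q).det = 0 := by
    have hd := RingHom.map_det (algebraMap ℝ ℂ) (aeval Sg q)
    rw [← hmap]
    have : ((aeval Sg) q).map ⇑(algebraMap ℝ ℂ) = (algebraMap ℝ ℂ).mapMatrix ((aeval Sg) q) := rfl
    rw [this, ← hd, h0, map_zero]
  have hcoe : (Sg.map (algebraMap ℝ ℂ)) = Sg.map (fun a => (a : ℂ)) := rfl
  have hunit : ¬ IsUnit (aeval (Sg.map (fun a => (a : ℂ))) q) := by
    rw [Matrix.isUnit_iff_isUnit_det, isUnit_iff_ne_zero, not_not, ← hcoe]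
    exact hdet
  -- switch to ℂ-aeval of mapped polynomial
  have hqc : q.map (algebraMap ℝ ℂ) = (A.map (fun a => (a : ℂ))).charpoly := by
    rw [hq, ← Matrix.charpoly_map A (algebraMap ℝ ℂ)]
    rfl
  have haeval : aeval (Sg.map (fun a => (a : ℂ))) ((A.map (fun a => (a : ℂ))).charpoly)
      = aeval (Sg.map (fun a => (a : ℂ))) q := by
    rw [← hqc, Polynomial.aeval_map_algebraMap]
  rw [← haeval] at hunit
  set Ac := A.map (fun a => (a : ℂ)) with hAc
  set Sc := Sg.map (fun a => (a : ℂ)) with hSc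
  rcases Nat.eq_zero_or_pos n with hn | hn
  · -- charpoly is 1
    have : Ac.charpoly = 1 := by
      have hm := Ac.charpoly_monic
      have hd : Ac.charpoly.natDegree = 0 := by
        rw [Matrix.charpoly_natDegree_eq_dim, Fintype.card_fin, hn]
      exact hm.natDegree_eq_zero.mp hd
    rw [this] at hunit
    exact hunit (by simpa using isUnit_one)
  · have hdeg : 0 < Ac.charpoly.degree := by
      rw [Matrix.charpoly_degree_eq_dim, Fintype.card_fin]
      exact_mod_cast hn
    have h0mem : (0 : ℂ) ∈ spectrum ℂ (aeval Sc Ac.charpoly) := (spectrum.zero_mem_iff (R := ℂ)).mpr hunit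
    rw [spectrum.map_polynomial_aeval_of_degree_pos Sc Ac.charpoly hdeg] at h0mem
    obtain ⟨μ, hμS, hμ0⟩ := h0mem
    have hμA : μ ∈ spectrum ℂ Ac := by
      apply mem_spectrum_of_root
      exact hμ0
    exact Set.disjoint_left.mp hspec hμS hμA

end Stmt13Aux


open Stmt13Aux in
/-- the left kernel of the (N_g+n)-step controllability matrix of the
block pair (diag(S_g,A),(w_0,x̄_0)) equals {(0,v) : vᵀ[x̄_0, Ax̄_0, ..., A^{n-1}x̄_0] = 0},
provided (S_g,w_0) is controllable and σ(S_g) ∩ σ(A) = ∅. -/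
theorem stmt_13 (n Ng : ℕ)
    (Sg : Matrix (Fin Ng) (Fin Ng) ℝ) (w0 : Fin Ng → ℝ)
    (A : Matrix (Fin n) (Fin n) ℝ) (xbar0 : Fin n → ℝ)
    (hctrb : (Matrix.of fun (i : Fin Ng) (j : Fin Ng) => ((Sg ^ (j : ℕ)) *ᵥ w0) i).rank = Ng)
    (hspec : Disjoint (spectrum ℂ (Sg.map (fun a => (a : ℂ))))
      (spectrum ℂ (A.map (fun a => (a : ℂ))))) :
    {z : (Fin Ng ⊕ Fin n) → ℝ |
        z ᵥ* (Matrix.of fun (i : Fin Ng ⊕ Fin n) (j : Fin (Ng + n)) =>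
          (((Matrix.fromBlocks Sg 0 0 A) ^ (j : ℕ)) *ᵥ (Sum.elim w0 xbar0)) i) = 0} =
      {z : (Fin Ng ⊕ Fin n) → ℝ |
        (∀ i : Fin Ng, z (Sum.inl i) = 0) ∧
        (fun i : Fin n => z (Sum.inr i)) ᵥ*
          (Matrix.of fun (i : Fin n) (j : Fin n) => ((A ^ (j : ℕ)) *ᵥ xbar0) i) = 0} := by
  have hpow : ∀ k : ℕ, (Matrix.fromBlocks Sg 0 0 A) ^ k
      = Matrix.fromBlocks (Sg ^ k) 0 0 (A ^ k) := by
    intro k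
    induction k with
    | zero => simp [Matrix.fromBlocks_one]
    | succ k ih => rw [pow_succ, pow_succ, pow_succ, ih, Matrix.fromBlocks_multiply]; simp
  ext z
  simp only [Set.mem_setOf_eq]
  set u : Fin Ng → ℝ := fun i => z (Sum.inl i) with hu
  set v : Fin n → ℝ := fun i => z (Sum.inr i) with hv
  have key : ∀ j : ℕ,
      z ⬝ᵥ (((Matrix.fromBlocks Sg 0 0 A) ^ j) *ᵥ (Sum.elim w0 xbar0))
        = u ⬝ᵥ ((Sg ^ j) *ᵥ w0) + v ⬝ᵥ ((A ^ j) *ᵥ xbar0) := by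
    intro j
    rw [hpow, Matrix.fromBlocks_mulVec]
    simp [dotProduct, Fintype.sum_sum_type, u, v]
  have hLiff : (z ᵥ* (Matrix.of fun (i : Fin Ng ⊕ Fin n) (j : Fin (Ng + n)) =>
          (((Matrix.fromBlocks Sg 0 0 A) ^ (j : ℕ)) *ᵥ (Sum.elim w0 xbar0)) i) = 0)
      ↔ ∀ j : Fin (Ng + n),
        u ⬝ᵥ ((Sg ^ (j:ℕ)) *ᵥ w0) + v ⬝ᵥ ((A ^ (j:ℕ)) *ᵥ xbar0) = 0 := by
    rw [funext_iff]
    refine forall_congr' fun j => ?_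
    rw [← key j]
    simp [Matrix.vecMul, dotProduct]
  have hRiff : ((fun i : Fin n => z (Sum.inr i)) ᵥ*
          (Matrix.of fun (i : Fin n) (j : Fin n) => ((A ^ (j : ℕ)) *ᵥ xbar0) i) = 0)
      ↔ ∀ j : Fin n, v ⬝ᵥ ((A ^ (j:ℕ)) *ᵥ xbar0) = 0 := by
    rw [funext_iff]
    refine forall_congr' fun j => ?_
    simp [Matrix.vecMul, dotProduct, v]
  rw [hLiff, hRiff]
  constructor
  · intro h
    set q := A.charpoly with hq
    have hA0 : aeval A q = 0 := A.aeval_self_charpoly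
    have hndeg : q.natDegree = n := by
      rw [hq, Matrix.charpoly_natDegree_eq_dim, Fintype.card_fin]
    have stepA : ∀ j : Fin Ng, (u ᵥ* (aeval Sg q)) ⬝ᵥ ((Sg ^ (j:ℕ)) *ᵥ w0) = 0 := by
      intro j
      have e1 : (u ᵥ* (aeval Sg q)) ⬝ᵥ ((Sg ^ (j:ℕ)) *ᵥ w0)
          = u ⬝ᵥ ((aeval Sg (q * X ^ (j:ℕ))) *ᵥ w0) := by
        rw [_root_.map_mul, map_pow, aeval_X, ← Matrix.mulVec_mulVec,
          Matrix.dotProduct_mulVec, Matrix.dotProduct_mulVec, Matrix.dotProduct_mulVec]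
      have e3 : v ⬝ᵥ ((aeval A (q * X ^ (j:ℕ))) *ᵥ xbar0) = 0 := by
        rw [_root_.map_mul, hA0, zero_mul]
        simp
      have e2 : u ⬝ᵥ ((aeval Sg (q * X ^ (j:ℕ))) *ᵥ w0)
          + v ⬝ᵥ ((aeval A (q * X ^ (j:ℕ))) *ᵥ xbar0) = 0 := by
        rw [dot_aeval, dot_aeval, ← Finset.sum_add_distrib]
        apply Finset.sum_eq_zero
        intro k hk
        rw [← mul_add]
        rcases eq_or_ne ((q * X ^ (j:ℕ)).coeff k) 0 with hc | hc
        · rw [hc, zero_mul]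
        · have h1 : k ≤ (q * X ^ (j:ℕ)).natDegree :=
            Nat.lt_succ_iff.mp (Finset.mem_range.mp hk)
          have h2 : (q * X ^ (j:ℕ)).natDegree ≤ n + (j:ℕ) := by
            refine le_trans natDegree_mul_le ?_
            rw [hndeg, natDegree_X_pow]
          have hklt : k < Ng + n := by
            have := j.isLt; omega
          have hz : u ⬝ᵥ ((Sg ^ k) *ᵥ w0) + v ⬝ᵥ ((A ^ k) *ᵥ xbar0) = 0 := h ⟨k, hklt⟩
          rw [hz, mul_zero]
      rw [e1]
      linarith [e2, e3]
    have hCunit : IsUnit (Matrix.of fun (i : Fin Ng) (j : Fin Ng) => ((Sg ^ (j:ℕ)) *ᵥ w0) i) :=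
      isUnit_of_rank_eq _ hctrb
    have hy0 : u ᵥ* (aeval Sg q) = 0 := by
      apply Matrix.vecMul_injective_iff_isUnit.mpr hCunit
      show (u ᵥ* (aeval Sg q)) ᵥ* _ = (0 : Fin Ng → ℝ) ᵥ* _
      rw [Matrix.zero_vecMul]
      funext j
      simpa [Matrix.vecMul, dotProduct] using stepA j
    have hu0 : u = 0 := by
      apply Matrix.vecMul_injective_iff_isUnit.mpr (isUnit_aeval_charpoly n Ng Sg A hspec)
      show u ᵥ* _ = (0 : Fin Ng → ℝ) ᵥ* _
      rw [Matrix.zero_vecMul]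
      exact hy0
    refine ⟨fun i => congrFun hu0 i, fun j => ?_⟩
    have hjlt : (j:ℕ) < Ng + n := by have := j.isLt; omega
    have hz : u ⬝ᵥ ((Sg ^ (j:ℕ)) *ᵥ w0) + v ⬝ᵥ ((A ^ (j:ℕ)) *ᵥ xbar0) = 0 := h ⟨j, hjlt⟩
    rw [hu0] at hz
    simpa using hz
  · rintro ⟨hz0, hzv⟩
    have hu0 : u = 0 := funext hz0
    have hall : ∀ j : ℕ, v ⬝ᵥ ((A ^ j) *ᵥ xbar0) = 0 := by
      intro j
      rw [A.pow_eq_aeval_mod_charpoly j, dot_aeval]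
      apply Finset.sum_eq_zero
      intro k hk
      rcases eq_or_ne ((X ^ j %ₘ A.charpoly).coeff k) 0 with hc | hc
      · rw [hc, zero_mul]
      · have hklt : k < n := by
          have h1 : (k : WithBot ℕ) ≤ (X ^ j %ₘ A.charpoly).degree := le_degree_of_ne_zero hc
          have h2 : (X ^ j %ₘ A.charpoly).degree < A.charpoly.degree :=
            degree_modByMonic_lt _ (A.charpoly_monic)
          have h3 : A.charpoly.degree = (n : WithBot ℕ) := by
            rw [Matrix.charpoly_degree_eq_dim, Fintype.card_fin]
          have := lt_of_le_of_lt h1 (h3 ▸ h2)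
          exact_mod_cast this
        rw [hzv ⟨k, hklt⟩, mul_zero]
    intro j
    rw [hu0]
    simp [hall (j:ℕ)]
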